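/- The map Ψ(τ, σ) = (sinh τ/(cosh τ − cos σ), −sin σ/(cosh τ − cos σ)) from the strip S = ℝ × (0, 2π) to ℝ² is injective, and its image is ℝ² \ {(x, 0) : |x| ≥ 1}. -/

import Mathlib

open Real

/-- The bipolar transform. -/
noncomputable def bipolar (p : ℝ × ℝ) : ℝ × ℝ :=
  (Real.sinh p.1 / (Real.cosh p.1 - Real.cos p.2),
   -Real.sin p.2 / (Real.cosh p.1 - Real.cos p.2))

lemma bp_cos_lt_one {σ : ℝ} (h1 : 0 < σ) (h2 : σ < 2*π) : Real.cos σ < 1 := by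
  rcases lt_or_eq_of_le (Real.cos_le_one σ) with h | h
  · exact h
  · exfalso
    have := (Real.cos_eq_one_iff_of_lt_of_lt (by linarith [Real.pi_pos]) h2).1 h
    linarith

lemma bp_D_pos {τ σ : ℝ} (h1 : 0 < σ) (h2 : σ < 2*π) :
    0 < Real.cosh τ - Real.cos σ := by
  have := Real.one_le_cosh τ
  have := bp_cos_lt_one h1 h2
  linarith

lemma bp_angle_eq {a b : ℝ} (ha1 : 0 < a) (ha2 : a < 2*π) (hb1 : 0 < b) (hb2 : b < 2*π)
    (hc : Real.cos a = Real.cos b) (hs : Real.sin a = Real.sin b) : a = b := by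
  have h : Real.cos (a - b) = 1 := by
    rw [Real.cos_sub, hc, hs]
    nlinarith [Real.sin_sq_add_cos_sq b]
  have := (Real.cos_eq_one_iff_of_lt_of_lt (by linarith) (by linarith)).1 h
  linarith

lemma bp_identity (τ σ : ℝ) :
    Real.sinh τ ^ 2 + Real.sin σ ^ 2 + (Real.cosh τ - Real.cos σ) ^ 2
      = 2 * Real.cosh τ * (Real.cosh τ - Real.cos σ) := by
  nlinarith [Real.cosh_sq τ, Real.sin_sq_add_cos_sq σ]

lemma bp_surj {x y : ℝ} (hq : ¬(y = 0 ∧ 1 ≤ |x|)) :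
    ∃ a b, (0 < b ∧ b < 2*π) ∧ bipolar (a, b) = (x, y) := by
  have hpi := Real.pi_pos
  -- positivity of Q
  have hQ : 0 < (x^2+y^2+1)^2 - 4*x^2 := by
    rcases not_and_or.1 hq with hy | hx
    · have h1 : 0 < (x-1)^2 + y^2 := by positivity
      have h2 : 0 < (x+1)^2 + y^2 := by positivity
      calc (0:ℝ) < ((x-1)^2+y^2) * ((x+1)^2+y^2) := mul_pos h1 h2
        _ = (x^2+y^2+1)^2 - 4*x^2 := by ring
    · have hx2 : x^2 < 1 := by
        have := abs_lt.1 (not_le.1 hx)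
        nlinarith [this.1, this.2]
      nlinarith [sq_nonneg y, sq_nonneg (y^2 + 2*x^2 + 2), sq_nonneg (1 - x^2)]
  set s := Real.sqrt ((x^2+y^2+1)^2 - 4*x^2) with hsdef
  have hs0 : 0 < s := Real.sqrt_pos.2 hQ
  have hs2 : s^2 = (x^2+y^2+1)^2 - 4*x^2 := Real.sq_sqrt hQ.le
  set c := (x^2+y^2-1)/s with hcdef
  have hcs : c^2 + (2*y/s)^2 = 1 := by
    rw [hcdef]
    field_simp
    linear_combination -hs2
  have hc1 : -1 ≤ c := by nlinarith [sq_nonneg (2*y/s)]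
  have hc2 : c ≤ 1 := by nlinarith [sq_nonneg (2*y/s)]
  set τ := Real.arsinh (2*x/s) with hτdef
  have hsinh : Real.sinh τ = 2*x/s := Real.sinh_arsinh _
  have hcosh : Real.cosh τ = (x^2+y^2+1)/s := by
    rw [hτdef, Real.cosh_arsinh]
    have h : 1 + (2*x/s)^2 = ((x^2+y^2+1)/s)^2 := by
      field_simp
      linear_combination hs2
    rw [h, Real.sqrt_sq (by positivity)]
  have key : ∀ b, 0 < b → b < 2*π → Real.cos b = c → Real.sin b = -(2*y)/s →
      bipolar (τ, b) = (x, y) := by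
    intro b _ _ hcb hsb
    have hD : Real.cosh τ - Real.cos b = 2/s := by
      rw [hcb, hcosh, hcdef]
      field_simp
      ring
    simp only [bipolar, Prod.mk.injEq]
    rw [hD, hsinh, hsb]
    constructor
    · field_simp
    · field_simp
  rcases lt_trichotomy y 0 with hy | hy | hy
  · -- y < 0 : b = arccos c
    have hclt : c < 1 := by
      rcases lt_or_eq_of_le hc2 with h | h
      · exact h
      · exfalso
        have h2 : (2*y/s)^2 = 0 := by nlinarith
        have : 2*y/s ≠ 0 := div_ne_zero (by linarith) hs0.ne'
        exact this ((pow_eq_zero_iff two_ne_zero).1 h2)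
    refine ⟨τ, Real.arccos c, ⟨Real.arccos_pos.2 hclt, by linarith [Real.arccos_le_pi c]⟩, ?_⟩
    apply key _ (Real.arccos_pos.2 hclt) (by linarith [Real.arccos_le_pi c])
    · exact Real.cos_arccos hc1 hc2
    · rw [Real.sin_arccos]
      have h1c : 1 - c^2 = (-(2*y)/s)^2 := by linear_combination -hcs
      rw [h1c, Real.sqrt_sq (div_nonneg (by linarith) hs0.le)]
  · -- y = 0 : b = π
    have hx : |x| < 1 := by
      by_contra h
      exact hq ⟨hy, not_lt.1 h⟩
    have hx2 : x^2 < 1 := by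
      have := abs_lt.1 hx
      nlinarith [this.1, this.2]
    subst hy
    have hsval : s = 1 - x^2 := by
      rw [hsdef, show (x^2+(0:ℝ)^2+1)^2 - 4*x^2 = (1-x^2)^2 by ring,
        Real.sqrt_sq (by nlinarith)]
    refine ⟨τ, π, ⟨hpi, by linarith⟩, ?_⟩
    apply key _ hpi (by linarith)
    · rw [Real.cos_pi, hcdef, hsval, eq_div_iff (by nlinarith : (1:ℝ)-x^2 ≠ 0)]
      ring
    · simp
  · -- y > 0 : b = 2π - arccos c
    have hclt : c < 1 := by
      rcases lt_or_eq_of_le hc2 with h | h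
      · exact h
      · exfalso
        have h2 : (2*y/s)^2 = 0 := by nlinarith
        have : 2*y/s ≠ 0 := div_ne_zero (by linarith) hs0.ne'
        exact this ((pow_eq_zero_iff two_ne_zero).1 h2)
    have ha0 : 0 < Real.arccos c := Real.arccos_pos.2 hclt
    have hap : Real.arccos c ≤ π := Real.arccos_le_pi c
    refine ⟨τ, 2*π - Real.arccos c, ⟨by linarith, by linarith⟩, ?_⟩
    apply key _ (by linarith) (by linarith)
    · rw [Real.cos_sub, Real.cos_two_pi, Real.sin_two_pi, Real.cos_arccos hc1 hc2]
      ring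
    · rw [Real.sin_sub, Real.cos_two_pi, Real.sin_two_pi, Real.sin_arccos]
      have h1c : 1 - c^2 = (2*y/s)^2 := by linear_combination -hcs
      rw [h1c, Real.sqrt_sq (div_nonneg (by linarith) hs0.le)]
      field_simp
      ring

theorem stmt_12 :
    Set.InjOn bipolar (Set.univ ×ˢ Set.Ioo 0 (2*π)) ∧
    bipolar '' (Set.univ ×ˢ Set.Ioo 0 (2*π))
      = {q : ℝ × ℝ | ¬ (q.2 = 0 ∧ 1 ≤ |q.1|)} := by
  constructor
  · -- injectivity
    rintro ⟨a, b⟩ h1 ⟨c, d⟩ h2 heq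
    simp only [Set.mem_prod, Set.mem_univ, Set.mem_Ioo, true_and] at h1 h2
    have hD1 : 0 < Real.cosh a - Real.cos b := bp_D_pos h1.1 h1.2
    have hD2 : 0 < Real.cosh c - Real.cos d := bp_D_pos h2.1 h2.2
    set D1 := Real.cosh a - Real.cos b with hD1def
    set D2 := Real.cosh c - Real.cos d with hD2def
    simp only [bipolar, Prod.mk.injEq] at heq
    have e1 : Real.sinh a * D2 = Real.sinh c * D1 :=
      (div_eq_div_iff hD1.ne' hD2.ne').1 heq.1
    have ey : Real.sin b * D2 = Real.sin d * D1 := by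
      have := (div_eq_div_iff hD1.ne' hD2.ne').1 heq.2
      linarith
    have id1 := bp_identity a b
    have id2 := bp_identity c d
    rw [← hD1def] at id1
    rw [← hD2def] at id2
    have h5 : (Real.cosh a * D2) * (2*D1*D2) = (Real.cosh c * D1) * (2*D1*D2) := by
      linear_combination (-(D2^2)) * id1 + D1^2 * id2 +
        (Real.sinh a * D2 + Real.sinh c * D1) * e1 +
        (Real.sin b * D2 + Real.sin d * D1) * ey
    have e2 : Real.cosh a * D2 = Real.cosh c * D1 :=
      mul_right_cancel₀ (by positivity) h5
    have h6 : (Real.sinh a * Real.cosh c) * D1 = (Real.cosh a * Real.sinh c) * D1 := by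
      linear_combination Real.cosh a * e1 - Real.sinh a * e2
    have h7 : Real.sinh a * Real.cosh c = Real.cosh a * Real.sinh c :=
      mul_right_cancel₀ hD1.ne' h6
    have hac : a = c := by
      have hs : Real.sinh (a - c) = Real.sinh 0 := by
        rw [Real.sinh_sub, Real.sinh_zero]; linarith
      have := Real.sinh_injective hs
      linarith
    subst hac
    have hDD : D2 = D1 := mul_left_cancel₀ (Real.cosh_pos a).ne' e2
    have hsin : Real.sin b = Real.sin d := by
      rw [hDD] at ey
      exact mul_right_cancel₀ hD1.ne' ey
    have hcos : Real.cos b = Real.cos d := by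
      have : Real.cosh a - D1 = Real.cosh a - D2 := by rw [hDD]
      rw [hD1def, hD2def] at this
      linarith
    have : b = d := bp_angle_eq h1.1 h1.2 h2.1 h2.2 hcos hsin
    rw [this]
  · -- image
    ext ⟨x, y⟩
    simp only [Set.mem_image, Set.mem_setOf_eq, Set.mem_prod, Set.mem_univ, Set.mem_Ioo,
      true_and, Prod.exists]
    constructor
    · rintro ⟨a, b, hb, habs⟩
      rintro ⟨hy, hx⟩
      have hD : 0 < Real.cosh a - Real.cos b := bp_D_pos hb.1 hb.2
      simp only [bipolar, Prod.mk.injEq] at habs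
      -- y = 0 forces sin b = 0, hence b = π
      have hsinb : Real.sin b = 0 := by
        have := habs.2
        rw [hy] at this
        field_simp at this
        simpa using this
      obtain ⟨n, hn⟩ := Real.sin_eq_zero_iff.1 hsinb
      have hpi := Real.pi_pos
      have hn1 : (0:ℤ) < n := by
        have : (0:ℝ) < (n:ℝ) := by nlinarith [hb.1]
        exact_mod_cast this
      have hn2 : (n:ℤ) < 2 := by
        have : (n:ℝ) < 2 := by nlinarith [hb.2]
        exact_mod_cast this
      have hbpi : b = π := by
        have : n = 1 := by omega
        rw [this] at hn
        simpa using hn.symm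
      have hcosb : Real.cos b = -1 := by rw [hbpi, Real.cos_pi]
      have hxval : x = Real.sinh a / (Real.cosh a + 1) := by
        rw [← habs.1, hcosb]; ring_nf
      have hxlt : |x| < 1 := by
        rw [hxval, abs_div, abs_of_pos (by positivity : (0:ℝ) < Real.cosh a + 1),
          div_lt_one (by positivity)]
        rw [abs_lt]
        constructor <;> nlinarith [Real.cosh_sq a, Real.cosh_pos a]
      linarith
    · exact fun hq => bp_surj hq
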